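/- Let d ≥ 1, let X and Y be independent ℝ^d-valued random variables each with density f with respect to Lebesgue measure, let H be an invertible d×d real matrix, let K : ℝ^d → ℝ be bounded, measurable and compactly supported, and let ρ : ℝ^d → ℝ be bounded and measurable. Then for all x, t ∈ ℝ^d, E[K_H(X − x) · K_H(Y − t) · ρ(X − Y)] = ∫∫_{ℝ^d×ℝ^d} K(p) K(q) ρ(x − t + H(p − q)) f(x + Hp) f(t + Hq) dp dq. -/

import Mathlib

open MeasureTheory ProbabilityTheory Filter
open scoped ENNReal NNReal Topology

noncomputable section

/-- The rescaled kernel `K_H(v) = |det H|⁻¹ * K (H⁻¹ v)`. -/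
def kernelScaled {d : ℕ} (H : Matrix (Fin d) (Fin d) ℝ) (K : (Fin d → ℝ) → ℝ)
    (v : Fin d → ℝ) : ℝ :=
  |H.det|⁻¹ * K (H⁻¹.mulVec v)

/-- Expectation computation in Lemma 4:
`E[K_H(X−x) K_H(Y−t) ρ(X−Y)]
  = ∫∫ K(p) K(q) ρ(x−t+H(p−q)) f(x+Hp) f(t+Hq) dp dq`. -/
lemma mulVec_measurable' {d : ℕ} (M : Matrix (Fin d) (Fin d) ℝ) :
    Measurable (fun v : Fin d → ℝ => M.mulVec v) := by
  have : (fun v : Fin d → ℝ => M.mulVec v) = ⇑(Matrix.toLin' M) := by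
    funext v; rw [Matrix.toLin'_apply]
  rw [this]
  exact (Matrix.toLin' M).continuous_of_finiteDimensional.measurable

lemma integral_comp_affine' {d : ℕ} (H : Matrix (Fin d) (Fin d) ℝ) (hH : H.det ≠ 0)
    (a : Fin d → ℝ) (F : (Fin d → ℝ) → ℝ) (hF : Measurable F) :
    ∫ u, F u = |H.det| * ∫ p, F (a + H.mulVec p) := by
  have hlin : Measurable (Matrix.toLin' H) :=
    (Matrix.toLin' H).continuous_of_finiteDimensional.measurable
  have h1 : ∫ p, F (a + H.mulVec p) = ∫ u, F (a + u) ∂(Measure.map (Matrix.toLin' H) volume) := by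
    have hm : AEStronglyMeasurable (fun u : Fin d → ℝ => F (a + u))
        (Measure.map (Matrix.toLin' H) volume) :=
      (hF.comp (measurable_const_add a)).aestronglyMeasurable
    rw [integral_map hlin.aemeasurable hm]
    simp [Matrix.toLin'_apply]
  rw [h1, Real.map_matrix_volume_pi_eq_smul_volume_pi hH, integral_smul_measure,
    ENNReal.toReal_ofReal (by positivity), integral_add_left_eq_self]
  rw [abs_inv, smul_eq_mul, ← mul_assoc, mul_inv_cancel₀ (abs_ne_zero.2 hH), one_mul]

theorem expectation_W4n {d : ℕ} (hd : 1 ≤ d)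
    {Ω : Type*} [MeasurableSpace Ω] (μ : Measure Ω) [IsProbabilityMeasure μ]
    (X Y : Ω → (Fin d → ℝ)) (hXmeas : Measurable X) (hYmeas : Measurable Y)
    (hindep : IndepFun X Y μ)
    (f : (Fin d → ℝ) → ℝ) (hfmeas : Measurable f) (hfnonneg : ∀ y, 0 ≤ f y)
    (hlawX : μ.map X = volume.withDensity (fun y => ENNReal.ofReal (f y)))
    (hlawY : μ.map Y = volume.withDensity (fun y => ENNReal.ofReal (f y)))
    (H : Matrix (Fin d) (Fin d) ℝ) (hH : H.det ≠ 0)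
    (K : (Fin d → ℝ) → ℝ) (hKmeas : Measurable K) (hKbd : ∃ C, ∀ u, |K u| ≤ C)
    (hKsupp : HasCompactSupport K)
    (ρ : (Fin d → ℝ) → ℝ) (hρmeas : Measurable ρ) (hρbd : ∃ C, ∀ u, |ρ u| ≤ C)
    (x t : Fin d → ℝ) :
    ∫ ω, kernelScaled H K (X ω - x) * kernelScaled H K (Y ω - t) * ρ (X ω - Y ω) ∂μ =
      ∫ p, ∫ q, K p * K q * ρ (x - t + H.mulVec (p - q)) *
        f (x + H.mulVec p) * f (t + H.mulVec q) := by
  obtain ⟨Ck, hCk⟩ := hKbd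
  obtain ⟨Cρ, hCρ⟩ := hρbd
  have hCk0 : 0 ≤ Ck := le_trans (abs_nonneg _) (hCk 0)
  have hCρ0 : 0 ≤ Cρ := le_trans (abs_nonneg _) (hCρ 0)
  have hDne : |H.det| ≠ 0 := abs_ne_zero.2 hH
  set G : (Fin d → ℝ) → (Fin d → ℝ) → ℝ := fun u v =>
    kernelScaled H K (u - x) * kernelScaled H K (v - t) * ρ (u - v) with hG
  have hKS : Measurable (kernelScaled H K) :=
    measurable_const.mul (hKmeas.comp (mulVec_measurable' H⁻¹))
  have hGmeas : Measurable (fun z : ((Fin d → ℝ) × (Fin d → ℝ)) => G z.1 z.2) :=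
    ((hKS.comp (measurable_fst.sub measurable_const)).mul
      (hKS.comp (measurable_snd.sub measurable_const))).mul
      (hρmeas.comp (measurable_fst.sub measurable_snd))
  have hPX : IsProbabilityMeasure (μ.map X) := Measure.isProbabilityMeasure_map hXmeas.aemeasurable
  have hPY : IsProbabilityMeasure (μ.map Y) := Measure.isProbabilityMeasure_map hYmeas.aemeasurable
  have hmap : μ.map (fun ω => (X ω, Y ω)) = (μ.map X).prod (μ.map Y) :=
    (indepFun_iff_map_prod_eq_prod_map_map hXmeas.aemeasurable hYmeas.aemeasurable).mp hindep
  have hpairmeas : Measurable (fun ω => (X ω, Y ω)) := hXmeas.prodMk hYmeas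
  have stepA : ∫ ω, G (X ω) (Y ω) ∂μ = ∫ z : ((Fin d → ℝ) × (Fin d → ℝ)), G z.1 z.2 ∂((μ.map X).prod (μ.map Y)) := by
    rw [← hmap]
    exact (integral_map hpairmeas.aemeasurable hGmeas.aestronglyMeasurable).symm
  have hKSbd : ∀ w, |kernelScaled H K w| ≤ |H.det|⁻¹ * Ck := fun w => by
    rw [kernelScaled, abs_mul, abs_inv, abs_abs]
    exact mul_le_mul_of_nonneg_left (hCk _) (by positivity)
  have hint : Integrable (fun z : ((Fin d → ℝ) × (Fin d → ℝ)) => G z.1 z.2) ((μ.map X).prod (μ.map Y)) := by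
    refine Integrable.mono'
      (integrable_const ((|H.det|⁻¹ * Ck) * (|H.det|⁻¹ * Ck) * Cρ))
      hGmeas.aestronglyMeasurable (ae_of_all _ fun z => ?_)
    have : ‖G z.1 z.2‖ = |kernelScaled H K (z.1 - x)| * |kernelScaled H K (z.2 - t)| *
        |ρ (z.1 - z.2)| := by
      rw [hG]; simp [Real.norm_eq_abs, abs_mul]
    rw [this]
    exact mul_le_mul (mul_le_mul (hKSbd _) (hKSbd _) (abs_nonneg _) (by positivity))
      (hCρ _) (abs_nonneg _) (by positivity)
  have stepB : ∫ z : ((Fin d → ℝ) × (Fin d → ℝ)), G z.1 z.2 ∂((μ.map X).prod (μ.map Y))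
      = ∫ u, (∫ v, G u v ∂(μ.map Y)) ∂(μ.map X) := integral_prod _ hint
  have hfNN : Measurable (fun y : (Fin d → ℝ) => (f y).toNNReal) := hfmeas.real_toNNReal
  have hwd : volume.withDensity (fun y : (Fin d → ℝ) => ENNReal.ofReal (f y))
      = volume.withDensity (fun y => ((f y).toNNReal : ℝ≥0∞)) := rfl
  have inner_eq : ∀ u : (Fin d → ℝ), (∫ v, G u v ∂(μ.map Y)) = ∫ v, f v * G u v := by
    intro u
    rw [hlawY, hwd, integral_withDensity_eq_integral_smul hfNN]
    congr 1; funext v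
    simp [NNReal.smul_def, smul_eq_mul, Real.coe_toNNReal _ (hfnonneg v)]
  have stepC : (∫ u, (∫ v, G u v ∂(μ.map Y)) ∂(μ.map X)) = ∫ u, f u * ∫ v, f v * G u v := by
    simp_rw [inner_eq]
    rw [hlawX, hwd, integral_withDensity_eq_integral_smul hfNN]
    congr 1; funext u
    simp [NNReal.smul_def, smul_eq_mul, Real.coe_toNNReal _ (hfnonneg u)]
  have hGu : ∀ u : (Fin d → ℝ), Measurable (fun v => f v * G u v) := fun u =>
    hfmeas.mul (((measurable_const.mul
      (hKS.comp (measurable_id.sub measurable_const))).mul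
      (hρmeas.comp (measurable_const.sub measurable_id))))
  have hinner_meas : Measurable (fun u : (Fin d → ℝ) => ∫ v, f v * G u v) :=
    (((hfmeas.comp measurable_snd).mul hGmeas).stronglyMeasurable.integral_prod_right').measurable
  have hF1 : Measurable (fun u : (Fin d → ℝ) => f u * ∫ v, f v * G u v) := hfmeas.mul hinner_meas
  have sub1 : (∫ u, f u * ∫ v, f v * G u v)
      = |H.det| * ∫ p, f (x + H.mulVec p) * ∫ v, f v * G (x + H.mulVec p) v :=
    integral_comp_affine' H hH x _ hF1
  have main : ∫ ω, G (X ω) (Y ω) ∂μ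
      = |H.det| * ∫ p, f (x + H.mulVec p) * ∫ v, f v * G (x + H.mulVec p) v :=
    ((stepA.trans stepB).trans stepC).trans sub1
  refine main.trans ?_
  rw [← integral_const_mul]
  refine integral_congr_ae (ae_of_all _ fun p => ?_)
  show |H.det| * (f (x + H.mulVec p) * ∫ v, f v * G (x + H.mulVec p) v)
      = ∫ q, K p * K q * ρ (x - t + H.mulVec (p - q)) * f (x + H.mulVec p) * f (t + H.mulVec q)
  rw [integral_comp_affine' H hH t _ (hGu (x + H.mulVec p))]
  have hGsimp : ∀ q : (Fin d → ℝ), G (x + H.mulVec p) (t + H.mulVec q)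
      = |H.det|⁻¹ * K p * (|H.det|⁻¹ * K q) * ρ (x - t + H.mulVec (p - q)) := by
    intro q
    have hinv : H⁻¹ * H = 1 := Matrix.nonsing_inv_mul H (isUnit_iff_ne_zero.2 hH)
    have h1 : x + H.mulVec p - x = H.mulVec p := by abel
    have h2 : t + H.mulVec q - t = H.mulVec q := by abel
    have h3 : (x + H.mulVec p) - (t + H.mulVec q) = x - t + H.mulVec (p - q) := by
      rw [Matrix.mulVec_sub]; abel
    have h4 : ∀ w : (Fin d → ℝ), kernelScaled H K (H.mulVec w) = |H.det|⁻¹ * K w := fun w => by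
      rw [kernelScaled, Matrix.mulVec_mulVec, hinv, Matrix.one_mulVec]
    rw [hG]
    simp only [h1, h2, h3, h4]
  simp_rw [hGsimp]
  have e1 : ∀ q : (Fin d → ℝ), f (t + H.mulVec q) *
      (|H.det|⁻¹ * K p * (|H.det|⁻¹ * K q) * ρ (x - t + H.mulVec (p - q)))
      = (|H.det|⁻¹ * |H.det|⁻¹) *
        (K p * K q * ρ (x - t + H.mulVec (p - q)) * f (t + H.mulVec q)) := fun q => by ring
  have e2 : ∀ q : (Fin d → ℝ), K p * K q * ρ (x - t + H.mulVec (p - q)) *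
      f (x + H.mulVec p) * f (t + H.mulVec q)
      = f (x + H.mulVec p) *
        (K p * K q * ρ (x - t + H.mulVec (p - q)) * f (t + H.mulVec q)) := fun q => by ring
  simp_rw [e1, e2, integral_const_mul]
  field_simp
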